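/- Let K be a compact convex subset of a locally convex topological real vector space, and let Aff_c(K) ⊆ C(K,ℝ) be the subspace of continuous affine real-valued functions on K. Then the weak topology on C(K,ℝ) (induced by the dual, i.e., by Radon measures on K) restricted to Aff_c(K) coincides with the topology of pointwise convergence on K. -/

import Mathlib

noncomputable section

variable {E : Type*} [AddCommGroup E] [Module ℝ E] [TopologicalSpace E]
  [IsTopologicalAddGroup E] [ContinuousSMul ℝ E]

/-- The continuous affine real-valued functions on a convex set `K`. -/
def AffC (K : Set E) (hK : Convex ℝ K) : Type _ :=
  {f : C(K, ℝ) // ∀ (x y : K) (t : ℝ) (ht0 : 0 ≤ t) (ht1 : t ≤ 1),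
    f ⟨t • (x : E) + (1 - t) • (y : E),
        hK x.2 y.2 ht0 (by linarith) (by ring)⟩ = t * f x + (1 - t) * f y}


namespace AffCProof

variable {X : Type*} [TopologicalSpace X] [CompactSpace X]

def posSet (L : C(X,ℝ) →L[ℝ] ℝ) (f : C(X,ℝ)) : Set ℝ :=
  {r | ∃ g : C(X,ℝ), 0 ≤ g ∧ g ≤ f ∧ L g = r}

variable (L : C(X,ℝ) →L[ℝ] ℝ)

lemma norm_le_of_le {g f : C(X,ℝ)} (h0 : 0 ≤ g) (h1 : g ≤ f) : ‖g‖ ≤ ‖f‖ := by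
  rw [ContinuousMap.norm_le _ (norm_nonneg f)]
  intro x
  have h0x := h0 x; have h1x := h1 x
  have hf := (f.norm_coe_le_norm x); rw [Real.norm_eq_abs, abs_le] at hf
  rw [Real.norm_eq_abs, abs_le]
  constructor <;> simp_all <;> linarith

lemma zero_mem_posSet {f : C(X,ℝ)} (hf : 0 ≤ f) : (0:ℝ) ∈ posSet L f :=
  ⟨0, le_rfl, hf, map_zero L⟩

lemma posSet_nonempty {f : C(X,ℝ)} (hf : 0 ≤ f) : (posSet L f).Nonempty :=
  ⟨0, zero_mem_posSet L hf⟩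

lemma posSet_bddAbove (f : C(X,ℝ)) : BddAbove (posSet L f) := by
  refine ⟨‖L‖ * ‖f‖, ?_⟩
  rintro r ⟨g, h0, h1, rfl⟩
  calc L g ≤ ‖L g‖ := le_abs_self _
    _ ≤ ‖L‖ * ‖g‖ := L.le_opNorm g
    _ ≤ ‖L‖ * ‖f‖ := mul_le_mul_of_nonneg_left (norm_le_of_le h0 h1) (norm_nonneg L)

def pos0 (f : C(X,ℝ)) : ℝ := sSup (posSet L f)

lemma le_pos0 {f : C(X,ℝ)} {r : ℝ} (hr : r ∈ posSet L f) : r ≤ pos0 L f :=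
  le_csSup (posSet_bddAbove L f) hr

lemma pos0_nonneg {f : C(X,ℝ)} (hf : 0 ≤ f) : 0 ≤ pos0 L f :=
  le_pos0 L (zero_mem_posSet L hf)

lemma self_le_pos0 {f : C(X,ℝ)} (hf : 0 ≤ f) : L f ≤ pos0 L f :=
  le_pos0 L ⟨f, hf, le_rfl, rfl⟩

lemma pos0_add {f f' : C(X,ℝ)} (hf : 0 ≤ f) (hf' : 0 ≤ f') :
    pos0 L (f + f') = pos0 L f + pos0 L f' := by
  apply le_antisymm
  · refine csSup_le (posSet_nonempty L (add_nonneg hf hf')) ?_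
    rintro r ⟨g, h0, h1, rfl⟩
    have hg1 : (0:C(X,ℝ)) ≤ g ⊓ f := le_inf h0 hf
    have hg1f : g ⊓ f ≤ f := inf_le_right
    have hg2 : (0:C(X,ℝ)) ≤ g - g ⊓ f := by rw [sub_nonneg]; exact inf_le_left
    have hg2f : g - g ⊓ f ≤ f' := by
      intro x
      have hfx : (0:ℝ) ≤ f' x := by simpa using hf' x
      have h1x' : g x ≤ f x + f' x := by simpa using h1 x
      show g x - (g ⊓ f) x ≤ f' x
      have hmin : (g ⊓ f) x = min (g x) (f x) := rfl
      rw [hmin]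
      rcases le_total (g x) (f x) with h | h
      · rw [min_eq_left h]; linarith
      · rw [min_eq_right h]; linarith
    have hsplit : L g = L (g ⊓ f) + L (g - g ⊓ f) := by
      rw [← map_add]; congr 1; abel
    rw [hsplit]
    exact add_le_add (le_pos0 L ⟨_, hg1, hg1f, rfl⟩) (le_pos0 L ⟨_, hg2, hg2f, rfl⟩)
  · have h : pos0 L f' ≤ pos0 L (f + f') - pos0 L f := by
      refine csSup_le (posSet_nonempty L hf') ?_
      rintro r ⟨g', h0', h1', rfl⟩
      have h2 : pos0 L f ≤ pos0 L (f + f') - L g' := by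
        refine csSup_le (posSet_nonempty L hf) ?_
        rintro s ⟨g, h0, h1, rfl⟩
        have := le_pos0 L ⟨g + g', add_nonneg h0 h0', add_le_add h1 h1', map_add L g g'⟩
        linarith
      linarith
    linarith

lemma pos0_smul {f : C(X,ℝ)} (hf : 0 ≤ f) {c : ℝ} (hc : 0 ≤ c) :
    pos0 L (c • f) = c * pos0 L f := by
  rcases eq_or_lt_of_le hc with rfl | hc
  · simp only [zero_smul, zero_mul]
    apply le_antisymm
    · refine csSup_le (posSet_nonempty L le_rfl) ?_
      rintro r ⟨g, h0, h1, rfl⟩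
      have : g = 0 := le_antisymm h1 h0
      simp [this]
    · exact pos0_nonneg L le_rfl
  · apply le_antisymm
    · refine csSup_le (posSet_nonempty L (smul_nonneg hc.le hf)) ?_
      rintro r ⟨g, h0, h1, rfl⟩
      have hg : g = c • (c⁻¹ • g) := by rw [smul_smul, mul_inv_cancel₀ hc.ne', one_smul]
      rw [hg, map_smul]
      have : L (c⁻¹ • g) ≤ pos0 L f := by
        refine le_pos0 L ⟨c⁻¹ • g, smul_nonneg (by positivity) h0, ?_, rfl⟩
        intro x
        have hx : g x ≤ c * f x := by simpa using h1 x
        show c⁻¹ * g x ≤ f x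
        rw [inv_mul_le_iff₀ hc]
        linarith
      exact mul_le_mul_of_nonneg_left this hc.le
    · rw [mul_comm, ← le_div_iff₀ hc]
      refine csSup_le (posSet_nonempty L hf) ?_
      rintro r ⟨g, h0, h1, rfl⟩
      rw [le_div_iff₀ hc, mul_comm, ← smul_eq_mul, ← map_smul]
      exact le_pos0 L ⟨c • g, smul_nonneg hc.le h0, smul_le_smul_of_nonneg_left h1 hc.le, rfl⟩


lemma one_nonneg' : (0:C(X,ℝ)) ≤ 1 := by
  intro x; simp

lemma smul_one_nonneg {c : ℝ} (hc : 0 ≤ c) : 0 ≤ c • (1:C(X,ℝ)) := by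
  intro x
  show (0:ℝ) ≤ c • (1:C(X,ℝ)) x
  simp [hc]

lemma shift_nonneg (f : C(X,ℝ)) : 0 ≤ f + ‖f‖ • (1:C(X,ℝ)) := by
  intro x
  have := (f.norm_coe_le_norm x); rw [Real.norm_eq_abs, abs_le] at this
  show (0:ℝ) ≤ f x + ‖f‖ • (1:C(X,ℝ)) x
  simp only [ContinuousMap.one_apply, smul_eq_mul, mul_one]
  linarith [this.1]

def posPart (f : C(X,ℝ)) : ℝ := pos0 L (f + ‖f‖ • 1) - ‖f‖ * pos0 L 1

lemma pos0_shift_mono {f : C(X,ℝ)} {c d : ℝ} (hcd : c ≤ d) (h : 0 ≤ f + c • 1) :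
    pos0 L (f + d • 1) = pos0 L (f + c • 1) + (d - c) * pos0 L 1 := by
  have he : f + d • 1 = (f + c • 1) + (d - c) • (1:C(X,ℝ)) := by
    ext x
    simp only [ContinuousMap.add_apply, ContinuousMap.smul_apply, ContinuousMap.one_apply,
      smul_eq_mul, mul_one]
    ring
  rw [he, pos0_add L h (smul_one_nonneg (by linarith)),
    pos0_smul L (one_nonneg' (X := X)) (by linarith : (0:ℝ) ≤ d - c)]

lemma posPart_eq {f : C(X,ℝ)} {c : ℝ} (hc : 0 ≤ c) (h : 0 ≤ f + c • 1) :
    posPart L f = pos0 L (f + c • 1) - c * pos0 L 1 := by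
  unfold posPart
  rcases le_total c ‖f‖ with hle | hle
  · rw [pos0_shift_mono L hle h]; ring
  · rw [pos0_shift_mono L hle (shift_nonneg f)]; ring

lemma posPart_add (f g : C(X,ℝ)) : posPart L (f + g) = posPart L f + posPart L g := by
  have hsplit : (f + g) + (‖f‖ + ‖g‖) • (1:C(X,ℝ)) = (f + ‖f‖ • 1) + (g + ‖g‖ • 1) := by
    ext x
    simp only [ContinuousMap.add_apply, ContinuousMap.smul_apply, ContinuousMap.one_apply,
      smul_eq_mul, mul_one]
    ring
  have hpos : 0 ≤ (f + g) + (‖f‖ + ‖g‖) • (1:C(X,ℝ)) := by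
    rw [hsplit]; exact add_nonneg (shift_nonneg f) (shift_nonneg g)
  rw [posPart_eq L (by positivity) hpos, hsplit,
    pos0_add L (shift_nonneg f) (shift_nonneg g)]
  unfold posPart
  ring

lemma posPart_smul_nonneg (f : C(X,ℝ)) {c : ℝ} (hc : 0 ≤ c) :
    posPart L (c • f) = c * posPart L f := by
  have hsplit : c • f + (c * ‖f‖) • (1:C(X,ℝ)) = c • (f + ‖f‖ • 1) := by
    ext x
    simp only [ContinuousMap.add_apply, ContinuousMap.smul_apply, ContinuousMap.one_apply,
      smul_eq_mul, mul_one]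
    ring
  have hpos : 0 ≤ c • f + (c * ‖f‖) • (1:C(X,ℝ)) := by
    rw [hsplit]; exact smul_nonneg hc (shift_nonneg f)
  rw [posPart_eq L (by positivity) hpos, hsplit, pos0_smul L (shift_nonneg f) hc]
  unfold posPart
  ring

lemma posPart_zero : posPart L 0 = 0 := by
  have := posPart_smul_nonneg L (0:C(X,ℝ)) (le_refl (0:ℝ))
  simpa using this

lemma posPart_neg (f : C(X,ℝ)) : posPart L (-f) = - posPart L f := by
  have := posPart_add L f (-f)
  simp only [add_neg_cancel, posPart_zero L] at this
  linarith

lemma posPart_smul (f : C(X,ℝ)) (c : ℝ) : posPart L (c • f) = c * posPart L f := by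
  rcases le_total 0 c with hc | hc
  · exact posPart_smul_nonneg L f hc
  · have : c • f = -((-c) • f) := by ext x; simp
    rw [this, posPart_neg, posPart_smul_nonneg L f (by linarith)]
    ring

lemma posPart_nonneg {f : C(X,ℝ)} (hf : 0 ≤ f) : 0 ≤ posPart L f := by
  rw [posPart_eq L le_rfl (by simpa using hf)]
  simp only [zero_mul, sub_zero]
  exact pos0_nonneg L (by simpa using hf)

lemma le_posPart {f : C(X,ℝ)} (hf : 0 ≤ f) : L f ≤ posPart L f := by
  rw [posPart_eq L le_rfl (by simpa using hf)]
  simp only [zero_mul, sub_zero]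
  have h0 : f + (0:ℝ) • (1:C(X,ℝ)) = f := by simp
  rw [h0]
  exact self_le_pos0 L hf




section Barycenter

set_option maxHeartbeats 1000000

variable {K : Set E} (hKconv : Convex ℝ K) [CompactSpace ↥K]

lemma lam_le (Λ : C(↥K,ℝ) →ₗ[ℝ] ℝ) (hpos : ∀ f, 0 ≤ f → 0 ≤ Λ f)
    {f : C(↥K,ℝ)} {c : ℝ} (h : ∀ x, f x ≤ c) : Λ f ≤ c * Λ 1 := by
  have h0 : (0:C(↥K,ℝ)) ≤ c • 1 - f := by
    intro x
    show (0:ℝ) ≤ (c • (1:C(↥K,ℝ)) - f) x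
    simp only [ContinuousMap.sub_apply, ContinuousMap.smul_apply, ContinuousMap.one_apply,
      smul_eq_mul, mul_one]
    linarith [h x]
  have := hpos _ h0
  rw [map_sub, map_smul] at this
  simp only [smul_eq_mul] at this
  linarith

lemma exists_barycenter (hne : K.Nonempty) (Λ : C(↥K,ℝ) →ₗ[ℝ] ℝ)
    (hpos : ∀ f, 0 ≤ f → 0 ≤ Λ f) :
    ∃ p : ↥K, ∀ f : AffC K hKconv, Λ f.1 = Λ 1 * f.1 p := by
  classical
  haveI : Nonempty ↥K := hne.to_subtype
  have hΛ1 : 0 ≤ Λ 1 := hpos 1 (one_nonneg')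
  rcases eq_or_lt_of_le hΛ1 with hz | hz
  · refine ⟨Classical.arbitrary ↥K, fun f => ?_⟩
    have h1 : Λ f.1 ≤ 0 := by
      have := lam_le Λ hpos (f := f.1) (c := ‖f.1‖)
        (fun x => by simpa using (abs_le.mp (by simpa [Real.norm_eq_abs] using f.1.norm_coe_le_norm x)).2)
      rw [← hz] at this; linarith
    have h2 : Λ (-f.1) ≤ 0 := by
      have := lam_le Λ hpos (f := -f.1) (c := ‖f.1‖)
        (fun x => by
          have := (abs_le.mp (by simpa [Real.norm_eq_abs] using f.1.norm_coe_le_norm x)).1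
          simp only [ContinuousMap.neg_apply]
          linarith)
      rw [← hz] at this; linarith
    rw [map_neg] at h2
    rw [← hz]
    simp
    linarith
  · -- Λ 1 > 0
    set v : AffC K hKconv → ℝ := fun f => Λ f.1 / Λ 1 with hv
    have key : ∀ f : AffC K hKconv, Λ f.1 = Λ 1 * v f := by
      intro f; rw [hv]; field_simp
    set S : AffC K hKconv → Set ↥K := fun f => {x | f.1 x = v f} with hS
    have hSclosed : ∀ f, IsClosed (S f) := fun f =>
      isClosed_eq f.1.continuous continuous_const
    have hmain : (Set.univ ∩ ⋂ f, S f).Nonempty := by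
      by_contra hemp
      rw [Set.not_nonempty_iff_eq_empty] at hemp
      obtain ⟨t, ht⟩ := isCompact_univ.elim_finite_subfamily_closed S hSclosed hemp
      -- finite-dimensional separation argument
      set Φ : ↥K → (↥t → ℝ) := fun x i => (i : AffC K hKconv).1 x with hΦ
      have hΦc : Continuous Φ := continuous_pi fun i => (i : AffC K hKconv).1.continuous
      set T : Set (↥t → ℝ) := Set.range Φ with hT
      have hTc : IsCompact T := isCompact_range hΦc
      have hTconv : Convex ℝ T := by
        rintro _ ⟨x, rfl⟩ _ ⟨y, rfl⟩ a b ha hb hab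
        obtain rfl : b = 1 - a := by linarith
        have ha1 : a ≤ 1 := by linarith
        refine ⟨⟨a • (x:E) + (1-a) • (y:E), hKconv x.2 y.2 ha (by linarith) (by ring)⟩, ?_⟩
        funext i
        have := (i : AffC K hKconv).2 x y a ha ha1
        simp only [hΦ, Pi.add_apply, Pi.smul_apply, smul_eq_mul]
        rw [this]
      set vv : ↥t → ℝ := fun i => v i with hvv
      by_cases hmem : vv ∈ T
      · obtain ⟨x, hx⟩ := hmem
        have hxmem : x ∈ Set.univ ∩ ⋂ f ∈ t, S f := by
          refine ⟨trivial, ?_⟩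
          simp only [Set.mem_iInter]
          intro f hf
          have := congrFun hx ⟨f, hf⟩
          exact this
        rw [ht] at hxmem
        exact hxmem
      · obtain ⟨ℓ, u, hsep, hx⟩ := geometric_hahn_banach_closed_point hTconv hTc.isClosed hmem
        set c : ↥t → ℝ := fun i => ℓ (fun j => if i = j then 1 else 0) with hc
        have hdecomp : ∀ y : ↥t → ℝ, ℓ y = ∑ i, y i * c i := by
          intro y
          conv_lhs => rw [pi_eq_sum_univ y]
          rw [map_sum]
          congr 1
          funext i
          rw [map_smul]
          simp [hc]
        set g : C(↥K,ℝ) := ⟨fun x => ℓ (Φ x), ℓ.continuous.comp hΦc⟩ with hg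
        have hgsum : g = ∑ i : ↥t, c i • ((i : AffC K hKconv).1 : C(↥K,ℝ)) := by
          ext x
          rw [hg]
          simp only [ContinuousMap.coe_mk]
          rw [hdecomp (Φ x)]
          rw [ContinuousMap.coe_sum]
          simp only [Finset.sum_apply, ContinuousMap.coe_smul, Pi.smul_apply, smul_eq_mul]
          congr 1
          funext i
          simp [hΦ, mul_comm]
        have hΛg : Λ g = Λ 1 * ℓ vv := by
          rw [hgsum, map_sum, hdecomp vv]
          rw [Finset.mul_sum]
          congr 1
          funext i
          rw [map_smul]
          simp only [smul_eq_mul]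
          rw [key i]
          simp only [hvv]
          ring
        have hub : Λ g ≤ u * Λ 1 := by
          refine lam_le Λ hpos ?_
          intro x
          exact (hsep (Φ x) ⟨x, rfl⟩).le
        have : Λ 1 * u < Λ 1 * ℓ vv := by
          exact mul_lt_mul_of_pos_left hx hz
        rw [← hΛg] at this
        linarith [hub, this]
    obtain ⟨p, -, hp⟩ := hmain
    rw [Set.mem_iInter] at hp
    refine ⟨p, fun f => ?_⟩
    have := hp f
    rw [hS] at this
    simp only [Set.mem_setOf_eq] at this
    rw [this]
    exact key f

end Barycenter


section Assembly

set_option maxHeartbeats 1000000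

variable {K : Set E} (hKconv : Convex ℝ K) [CompactSpace ↥K]

/-- packaging the positive part as a linear map -/
def posPartLM (L : C(↥K,ℝ) →L[ℝ] ℝ) : C(↥K,ℝ) →ₗ[ℝ] ℝ where
  toFun := posPart L
  map_add' := posPart_add L
  map_smul' := fun c f => by simp [posPart_smul L f c]

lemma exists_rep (hne : K.Nonempty) (L : C(↥K,ℝ) →L[ℝ] ℝ) :
    ∃ (a b : ℝ) (p q : ↥K), ∀ f : AffC K hKconv, L f.1 = a * f.1 p - b * f.1 q := by
  set Λ₁ : C(↥K,ℝ) →ₗ[ℝ] ℝ := posPartLM L with hΛ₁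
  set Λ₂ : C(↥K,ℝ) →ₗ[ℝ] ℝ := Λ₁ - (L : C(↥K,ℝ) →ₗ[ℝ] ℝ) with hΛ₂
  have hpos₁ : ∀ f, 0 ≤ f → 0 ≤ Λ₁ f := fun f hf => posPart_nonneg L hf
  have hpos₂ : ∀ f, 0 ≤ f → 0 ≤ Λ₂ f := by
    intro f hf
    simp only [hΛ₂, LinearMap.sub_apply]
    have := le_posPart L hf
    simp only [hΛ₁]
    change 0 ≤ posPartLM L f - L f
    show (0:ℝ) ≤ posPart L f - L f
    linarith
  obtain ⟨p, hp⟩ := exists_barycenter hKconv hne Λ₁ hpos₁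
  obtain ⟨q, hq⟩ := exists_barycenter hKconv hne Λ₂ hpos₂
  refine ⟨Λ₁ 1, Λ₂ 1, p, q, fun f => ?_⟩
  have : L f.1 = Λ₁ f.1 - Λ₂ f.1 := by
    simp [hΛ₂]
  rw [this, hp f, hq f]

end Assembly

/-- two topologies on a subsingleton coincide -/
lemma topology_eq_of_subsingleton {α : Type*} [Subsingleton α]
    (t₁ t₂ : TopologicalSpace α) : t₁ = t₂ := by
  apply TopologicalSpace.ext
  funext s
  rcases s.eq_empty_or_nonempty with rfl | ⟨x, hx⟩
  · simp only [eq_iff_iff]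
    exact ⟨fun _ => @isOpen_empty _ t₂, fun _ => @isOpen_empty _ t₁⟩
  · have : s = Set.univ := Set.eq_univ_of_forall fun y => Subsingleton.elim x y ▸ hx
    subst this
    simp only [eq_iff_iff]
    exact ⟨fun _ => @isOpen_univ _ t₂, fun _ => @isOpen_univ _ t₁⟩

end AffCProof

/-- Lemma 3.6: on the space of continuous affine functions on a compact
convex set `K` (in a locally convex space), the weak topology of `C(K,ℝ)` (induced by
its topological dual, i.e. by Radon measures on `K`) coincides with the topology of
pointwise convergence on `K`. -/
theorem weak_topology_eq_pointwise_on_affine [LocallyConvexSpace ℝ E]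
    (K : Set E) (hKc : IsCompact K) (hKconv : Convex ℝ K) :
    TopologicalSpace.induced
        (fun f : AffC K hKconv => toWeakSpace ℝ C(K, ℝ) f.1) inferInstance
      = TopologicalSpace.induced
          (fun (f : AffC K hKconv) (x : K) => f.1 x) Pi.topologicalSpace := by
  classical
  haveI : CompactSpace ↥K := isCompact_iff_compactSpace.mp hKc
  rcases K.eq_empty_or_nonempty with rfl | hne
  · haveI : IsEmpty ↥(∅ : Set E) := by simp [Set.isEmpty_coe_sort]
    haveI : Subsingleton (AffC (∅ : Set E) hKconv) := by
      constructor
      intro f g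
      apply Subtype.ext
      apply ContinuousMap.ext
      intro x
      exact absurd x.2 (Set.notMem_empty x.1)
    exact AffCProof.topology_eq_of_subsingleton _ _
  · apply le_antisymm
    · -- weak ≤ pointwise : the pointwise map is continuous for the weak-induced topology
      letI tW : TopologicalSpace (AffC K hKconv) :=
        TopologicalSpace.induced
          (fun f : AffC K hKconv => toWeakSpace ℝ C(K, ℝ) f.1) inferInstance
      refine continuous_iff_le_induced.mp ?_
      apply continuous_pi
      intro x
      -- evaluation at x as a continuous linear functional on C(K,ℝ)
      let ev : C(↥K,ℝ) →L[ℝ] ℝ :=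
        { toFun := fun f => f x
          map_add' := fun f g => rfl
          map_smul' := fun c f => rfl
          cont := continuous_eval_const x }
      have h1 : Continuous fun f : AffC K hKconv =>
          (toWeakSpace ℝ C(K,ℝ) f.1 : WeakSpace ℝ C(K,ℝ)) := continuous_induced_dom
      have h2 : Continuous fun w : WeakSpace ℝ C(K,ℝ) =>
          ((topDualPairing ℝ C(K,ℝ)).flip w) ev :=
        WeakBilin.eval_continuous ((topDualPairing ℝ C(K,ℝ)).flip) ev
      exact h2.comp h1
    · -- pointwise ≤ weak
      letI tP : TopologicalSpace (AffC K hKconv) :=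
        TopologicalSpace.induced
          (fun (f : AffC K hKconv) (x : K) => f.1 x) Pi.topologicalSpace
      refine continuous_iff_le_induced.mp ?_
      apply WeakBilin.continuous_of_continuous_eval
      intro L
      show Continuous fun f : AffC K hKconv => L f.1
      obtain ⟨a, b, p, q, hrep⟩ := AffCProof.exists_rep hKconv hne L
      have : (fun f : AffC K hKconv => L f.1)
          = fun f : AffC K hKconv => a * f.1 p - b * f.1 q := funext hrep
      rw [this]
      have hcoe : Continuous fun f : AffC K hKconv => (fun x : ↥K => f.1 x) :=
        continuous_induced_dom
      have hp : Continuous fun f : AffC K hKconv => f.1 p :=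
        (continuous_apply p).comp hcoe
      have hq : Continuous fun f : AffC K hKconv => f.1 q :=
        (continuous_apply q).comp hcoe
      exact ((continuous_const.mul hp).sub (continuous_const.mul hq))
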